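/- Let m ≥ 1 and p ≥ 1 with p dividing m, and let c : {1,…,m} → {1,…,p} be a surjective coloring all of whose fibers I_j = c⁻¹(j) have the same cardinality m/p. Let F be the set of ALL vectors f ∈ [-1,1]^m that respect c. Then the empirical Rademacher complexity satisfies R(F) ≥ √(p/(2m)). -/

import Mathlib

open Finset

/-- Empirical Rademacher complexity of a set `F` of vectors in `ℝ^m`:
the average over all `2^m` sign vectors (encoded as `Fin m → Bool`, with
`true ↦ 1` and `false ↦ -1`) of `sup_{f ∈ F} (1/m) ∑ i σ i * f i`. -/
noncomputable def radComplexity (m : ℕ) (F : Set (Fin m → ℝ)) : ℝ :=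
  (∑ σ : Fin m → Bool,
      ⨆ f : F, (1 / (m : ℝ)) * ∑ i, (if σ i then (1 : ℝ) else -1) * (f : Fin m → ℝ) i) /
    2 ^ m

/-! ### Auxiliary definitions: Rademacher averages of absolute sign sums -/

noncomputable def radT (n : ℕ) : ℝ :=
  ∑ σ : Fin n → Bool, |∑ i, (if σ i then (1 : ℝ) else -1)|

noncomputable def radZ (n : ℕ) : ℕ :=
  (Finset.univ.filter fun σ : Fin n → Bool =>
    (∑ i, (if σ i then (1 : ℝ) else -1)) = 0).card

noncomputable def radB (n : ℕ) : ℝ := radT n / 2 ^ n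

lemma radT_zero : radT 0 = 0 := by simp [radT]

lemma radZ_zero : radZ 0 = 1 := by
  rw [radZ]
  rw [Finset.filter_true_of_mem (by simp)]
  simp

lemma abs_step (s : ℝ) : 2 * |s| + (if s = 0 then (2:ℝ) else 0) ≤ |s + 1| + |s - 1| := by
  rcases eq_or_ne s 0 with h | h
  · simp [h]; norm_num
  · simp only [if_neg h]
    rcases le_or_gt 0 s with hs | hs
    · rcases le_or_gt 1 s with h1 | h1
      · rw [abs_of_nonneg hs, abs_of_nonneg (by linarith), abs_of_nonneg (by linarith)]
        ring_nf; linarith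
      · rw [abs_of_nonneg hs, abs_of_nonneg (by linarith), abs_of_nonpos (by linarith)]
        have : 0 < s := lt_of_le_of_ne hs (Ne.symm h)
        nlinarith
    · rcases le_or_gt s (-1) with h1 | h1
      · rw [abs_of_neg hs, abs_of_nonpos (by linarith), abs_of_nonpos (by linarith)]
        ring_nf; linarith
      · rw [abs_of_neg hs, abs_of_nonneg (by linarith), abs_of_nonpos (by linarith)]
        nlinarith

lemma radT_succ (n : ℕ) : 2 * radT n + 2 * radZ n ≤ radT (n + 1) := by
  have h1 : radT (n + 1) =
      ∑ x : Bool × (Fin n → Bool), |(if x.1 then (1:ℝ) else -1) + ∑ i, (if x.2 i then (1:ℝ) else -1)| := by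
    rw [radT]
    apply Fintype.sum_equiv (Fin.consEquiv (fun _ => Bool)).symm
    intro σ
    rw [Fin.sum_univ_succ]
    rfl
  rw [h1, Fintype.sum_prod_type, Fintype.sum_bool]
  have h2 : ∀ τ : Fin n → Bool,
      2 * |∑ i, (if τ i then (1:ℝ) else -1)| +
        (if (∑ i, (if τ i then (1:ℝ) else -1)) = 0 then (2:ℝ) else 0) ≤
      |(1:ℝ) + ∑ i, (if τ i then (1:ℝ) else -1)| +
        |(-1:ℝ) + ∑ i, (if τ i then (1:ℝ) else -1)| := by
    intro τ
    have := abs_step (∑ i, (if τ i then (1:ℝ) else -1))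
    calc 2 * |∑ i, (if τ i then (1:ℝ) else -1)| + _ ≤ _ := this
    _ = _ := by rw [add_comm (∑ i, (if τ i then (1:ℝ) else -1)) 1]; congr 2; ring
  calc 2 * radT n + 2 * radZ n
      = ∑ τ : Fin n → Bool, (2 * |∑ i, (if τ i then (1:ℝ) else -1)| +
          (if (∑ i, (if τ i then (1:ℝ) else -1)) = 0 then (2:ℝ) else 0)) := by
        rw [Finset.sum_add_distrib, ← Finset.mul_sum, radT, radZ]
        congr 1
        rw [← Finset.sum_filter, Finset.sum_const, nsmul_eq_mul]
        ring
    _ ≤ _ := by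
        rw [← Finset.sum_add_distrib]
        exact Finset.sum_le_sum fun τ _ => h2 τ

lemma sum_signs_card (n : ℕ) (s : Finset (Fin n)) :
    (∑ i, (if i ∈ s then (1 : ℝ) else -1)) = 2 * s.card - n := by
  have h1 : ∀ i : Fin n, (if i ∈ s then (1 : ℝ) else -1) = (if i ∈ s then (2:ℝ) else 0) - 1 := by
    intro i; split <;> norm_num
  have h2 : (∑ i, if i ∈ s then (2:ℝ) else 0) = 2 * s.card := by
    rw [Finset.sum_ite_mem, Finset.univ_inter, Finset.sum_const, nsmul_eq_mul]; ring
  simp_rw [h1]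
  rw [Finset.sum_sub_distrib, h2, Finset.sum_const, nsmul_eq_mul, Finset.card_univ,
    Fintype.card_fin]
  ring

lemma radZ_even (m : ℕ) : Nat.centralBinom m ≤ radZ (2 * m) := by
  have hc : Nat.centralBinom m = (Finset.powersetCard m (univ : Finset (Fin (2*m)))).card := by
    rw [Finset.card_powersetCard, Finset.card_univ, Fintype.card_fin, Nat.centralBinom]
  rw [radZ, hc]
  apply Finset.card_le_card_of_injOn (fun s => fun i => decide (i ∈ s))
  · intro s hs
    simp only [Finset.mem_coe, Finset.mem_powersetCard_univ] at hs
    simp only [Finset.mem_coe, Finset.mem_filter, Finset.mem_univ, true_and]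
    have h1 : ∀ i : Fin (2*m), (if decide (i ∈ s) then (1:ℝ) else -1) = (if i ∈ s then (1:ℝ) else -1) := by
      intro i; simp
    simp_rw [h1, sum_signs_card, hs]
    push_cast; ring
  · intro s _ t _ h
    ext i
    have := congrFun h i
    simpa using this

lemma centralBinom_real (m : ℕ) (hm : 1 ≤ m) :
    (4:ℝ) ^ m ≤ 2 * Real.sqrt m * Nat.centralBinom m := by
  induction m with
  | zero => omega
  | succ k ih =>
    rcases Nat.eq_or_lt_of_le hm with h | h
    · simp [← h, Nat.centralBinom]
      norm_num [Nat.centralBinom]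
    · have hk : 1 ≤ k := by omega
      have IH := ih hk
      have hrec : ((k:ℝ) + 1) * Nat.centralBinom (k+1) = 2 * (2*k+1) * Nat.centralBinom k := by
        exact_mod_cast congrArg (Nat.cast : ℕ → ℝ) (Nat.succ_mul_centralBinom_succ k)
      have hk0 : (0:ℝ) < k := by positivity
      have hk1 : (0:ℝ) < (k:ℝ) + 1 := by positivity
      have key : 2 * Real.sqrt k * Real.sqrt (k+1) ≤ 2*(k:ℝ)+1 := by
        have h1 : Real.sqrt k * Real.sqrt (k+1) = Real.sqrt (k*(k+1)) := (Real.sqrt_mul (by positivity) _).symm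
        have h2 : Real.sqrt ((k:ℝ)*(k+1)) ≤ (2*(k:ℝ)+1)/2 := by
          rw [show (2*(k:ℝ)+1)/2 = Real.sqrt (((2*(k:ℝ)+1)/2)^2) by rw [Real.sqrt_sq (by positivity)]]
          apply Real.sqrt_le_sqrt
          nlinarith
        rw [mul_assoc, h1]; linarith
      push_cast
      have hC : (Nat.centralBinom (k+1) : ℝ) = 2 * (2*k+1) * Nat.centralBinom k / ((k:ℝ)+1) := by
        field_simp at hrec ⊢; linarith
      rw [hC]
      have hCk : (0:ℝ) < Nat.centralBinom k := by
        exact_mod_cast Nat.centralBinom_pos k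
      have h4 : (4:ℝ)^(k+1) = 4 * 4^k := by ring
      rw [h4]
      have hsq : Real.sqrt ((k:ℝ)+1) * Real.sqrt ((k:ℝ)+1) = (k:ℝ)+1 :=
        Real.mul_self_sqrt (by positivity)
      have hsk : (0:ℝ) ≤ Real.sqrt k := Real.sqrt_nonneg _
      have hsk1 : (0:ℝ) ≤ Real.sqrt ((k:ℝ)+1) := Real.sqrt_nonneg _
      have hs1 : Real.sqrt k * Real.sqrt ((k:ℝ)+1) * Real.sqrt ((k:ℝ)+1)
          = Real.sqrt k * ((k:ℝ)+1) := by rw [mul_assoc, hsq]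
      have step : 4 * ((2:ℝ) * Real.sqrt k * Nat.centralBinom k) ≤
          2 * Real.sqrt ((k:ℝ)+1) * (2 * (2*(k:ℝ)+1) * Nat.centralBinom k / ((k:ℝ)+1)) := by
        rw [← mul_div_assoc, le_div_iff₀ hk1]
        nlinarith [mul_le_mul_of_nonneg_right key
          (by positivity : (0:ℝ) ≤ 4 * Real.sqrt ((k:ℝ)+1) * Nat.centralBinom k)]
      calc (4:ℝ) * 4^k ≤ 4 * (2 * Real.sqrt k * Nat.centralBinom k) := by linarith
        _ ≤ _ := step

lemma sqrt_le_of_sq {a r : ℝ} (hr : 0 ≤ r) (h : a ≤ r ^ 2) : Real.sqrt a ≤ r := by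
  calc Real.sqrt a ≤ Real.sqrt (r ^ 2) := Real.sqrt_le_sqrt h
    _ = r := Real.sqrt_sq hr

lemma radB_succ (n : ℕ) : radB n + radZ n / 2 ^ n ≤ radB (n + 1) := by
  rw [radB, radB, ← add_div, div_le_div_iff₀ (by positivity) (by positivity)]
  have h := radT_succ n
  calc (radT n + (radZ n : ℝ)) * 2^(n+1) = (2*radT n + 2*radZ n) * 2^n := by ring
    _ ≤ radT (n+1) * 2^n := mul_le_mul_of_nonneg_right h (by positivity)

lemma radB_mono (n : ℕ) : radB n ≤ radB (n + 1) := by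
  have h := radB_succ n
  have h2 : (0:ℝ) ≤ radZ n / 2 ^ n := by positivity
  linarith

lemma radB_one : 1 ≤ radB 1 := by
  have h := radB_succ 0
  rw [radB, radB, radT_zero, radZ_zero] at h
  norm_num at h
  rw [radB]; norm_num; linarith

lemma radB_odd_step (m : ℕ) (hm : 1 ≤ m) (h : Real.sqrt m ≤ radB (2*m)) :
    Real.sqrt m + 1/(2*Real.sqrt m) ≤ radB (2*m+1) := by
  have h1 := radB_succ (2*m)
  have h4 : (2:ℝ)^(2*m) = 4^m := by rw [pow_mul]; norm_num
  have hsm : (0:ℝ) < Real.sqrt m := Real.sqrt_pos.2 (by exact_mod_cast hm)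
  have hz : (1:ℝ)/(2*Real.sqrt m) ≤ radZ (2*m) / 2^(2*m) := by
    rw [h4]
    have hcb := centralBinom_real m hm
    have hZ : (Nat.centralBinom m : ℝ) ≤ radZ (2*m) := by exact_mod_cast radZ_even m
    rw [div_le_div_iff₀ (by positivity) (by positivity)]
    nlinarith
  linarith

lemma radB_even_all (m : ℕ) : Real.sqrt m ≤ radB (2*m) := by
  induction m with
  | zero => simp [radB, radT_zero]
  | succ k ih =>
    rcases Nat.eq_zero_or_pos k with hk | hk
    · subst hk
      have h1 := radB_one
      have h2 := radB_mono 1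
      norm_num
      linarith
    · have hodd := radB_odd_step k hk ih
      have hmono : radB (2*k+1) ≤ radB (2*k+2) := radB_mono (2*k+1)
      have hk0 : (0:ℝ) < (k:ℝ) := by exact_mod_cast hk
      have hsk : (0:ℝ) < Real.sqrt k := Real.sqrt_pos.2 hk0
      have hksq : Real.sqrt k * Real.sqrt k = (k:ℝ) := Real.mul_self_sqrt (by positivity)
      have key : Real.sqrt ((k:ℝ)+1) ≤ radB (2*k+2) := by
        refine le_trans (sqrt_le_of_sq (by positivity) ?_) (le_trans hodd hmono)
        have hexp : (Real.sqrt k + 1 / (2 * Real.sqrt k))^2 = (k:ℝ) + 1 + 1/(4*k) := by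
          field_simp
          linear_combination (16*(k:ℝ)*(Real.sqrt k)^2 - 4) * hksq
        rw [hexp]
        have : (0:ℝ) < 1/(4*(k:ℝ)) := by positivity
        linarith
      have harr : 2 * (k+1) = 2*k + 2 := by ring
      rw [harr, show (((k+1:ℕ)):ℝ) = (k:ℝ)+1 by push_cast; ring]
      exact key

lemma khintchine (n : ℕ) : Real.sqrt ((n:ℝ)/2) ≤ radB n := by
  rcases Nat.even_or_odd n with ⟨r, hr⟩ | ⟨r, hr⟩
  · subst hr
    have : ((r + r : ℕ) : ℝ)/2 = (r:ℝ) := by push_cast; ring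
    rw [this, show r + r = 2*r by ring]
    exact radB_even_all r
  · subst hr
    rcases Nat.eq_zero_or_pos r with hr0 | hr0
    · subst hr0
      have h1 := radB_one
      refine le_trans (sqrt_le_of_sq (by norm_num : (0:ℝ) ≤ 1) ?_) (by norm_num; linarith)
      push_cast; norm_num
    · have hodd := radB_odd_step r hr0 (radB_even_all r)
      have hk0 : (0:ℝ) < (r:ℝ) := by exact_mod_cast hr0
      have hsk : (0:ℝ) < Real.sqrt r := Real.sqrt_pos.2 hk0
      have hksq : Real.sqrt r * Real.sqrt r = (r:ℝ) := Real.mul_self_sqrt (by positivity)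
      refine le_trans (sqrt_le_of_sq (by positivity) ?_) hodd
      have hexp : (Real.sqrt r + 1 / (2 * Real.sqrt r))^2 = (r:ℝ) + 1 + 1/(4*r) := by
        field_simp
        linear_combination (16*(r:ℝ)*(Real.sqrt r)^2 - 4) * hksq
      rw [hexp]
      push_cast
      have : (0:ℝ) < 1/(4*(r:ℝ)) := by positivity
      linarith

lemma radT_card (α : Type*) [Fintype α] [DecidableEq α] :
    ∑ τ : α → Bool, |∑ i : α, (if τ i then (1 : ℝ) else -1)| = radT (Fintype.card α) := by
  rw [radT]
  apply Fintype.sum_equiv (Equiv.arrowCongr (Fintype.equivFin α) (Equiv.refl Bool))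
  intro τ
  congr 1
  exact ((Fintype.equivFin α).symm.sum_comp fun i => if τ i then (1:ℝ) else -1).symm

lemma sum_abs_subset (m : ℕ) (s : Finset (Fin m)) :
    ∑ σ : Fin m → Bool, |∑ i ∈ s, (if σ i then (1 : ℝ) else -1)| =
      2 ^ (m - s.card) * radT s.card := by
  have key : ∀ σ : Fin m → Bool,
      |∑ i ∈ s, (if σ i then (1 : ℝ) else -1)| =
      |∑ i : {x // x ∈ s}, (if σ i then (1 : ℝ) else -1)| := by
    intro σ
    congr 1
    exact (Finset.sum_coe_sort s fun i => if σ i then (1:ℝ) else -1).symm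
  simp_rw [key]
  have he := Fintype.sum_equiv (Equiv.piEquivPiSubtypeProd (fun i => i ∈ s) (fun _ => Bool))
    (fun σ : Fin m → Bool => |∑ i : {x // x ∈ s}, (if σ i.1 then (1:ℝ) else -1)|)
    (fun x : ({i // i ∈ s} → Bool) × ({i // ¬ i ∈ s} → Bool) =>
      |∑ i : {x // x ∈ s}, (if x.1 i then (1:ℝ) else -1)|)
    (fun σ => rfl)
  rw [he, Fintype.sum_prod_type]
  have hcard : Fintype.card (({i : Fin m // ¬ i ∈ s} → Bool)) = 2 ^ (m - s.card) := by
    rw [Fintype.card_fun, Fintype.card_bool, Fintype.card_subtype_compl, Fintype.card_coe,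
      Fintype.card_fin]
  have hinner : ∀ a : {i // i ∈ s} → Bool,
      (∑ _b : {i : Fin m // ¬ i ∈ s} → Bool, |∑ i : {x // x ∈ s}, (if a i then (1:ℝ) else -1)|)
      = (2:ℝ) ^ (m - s.card) * |∑ i : {x // x ∈ s}, (if a i then (1:ℝ) else -1)| := by
    intro a
    rw [Finset.sum_const, Finset.card_univ, hcard, nsmul_eq_mul]
    push_cast
    ring
  simp_rw [hinner]
  rw [← Finset.mul_sum, radT_card, Fintype.card_coe]

theorem rademacher_lower_bound_uniform_partition (m p : ℕ) (hm : 1 ≤ m) (hp : 1 ≤ p)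
    (hdvd : p ∣ m) (c : Fin m → Fin p) (hsurj : Function.Surjective c)
    (hfib : ∀ j : Fin p, (Finset.univ.filter fun i => c i = j).card = m / p) :
    Real.sqrt ((p : ℝ) / (2 * m)) ≤
      radComplexity m
        {f : Fin m → ℝ | (∀ i, f i ∈ Set.Icc (-1 : ℝ) 1) ∧
          ∀ i j : Fin m, c i = c j → f i = f j} := by
  set F : Set (Fin m → ℝ) := {f : Fin m → ℝ | (∀ i, f i ∈ Set.Icc (-1 : ℝ) 1) ∧
          ∀ i j : Fin m, c i = c j → f i = f j} with hF
  set n := m / p with hn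
  have hmpos : (0:ℝ) < m := by exact_mod_cast hm
  have hppos : (0:ℝ) < p := by exact_mod_cast hp
  have hnm : n ≤ m := Nat.div_le_self m p
  have hnp : ((n:ℝ)) * p = m := by exact_mod_cast Nat.div_mul_cancel hdvd
  -- lower bound each sup
  have hsup : ∀ σ : Fin m → Bool,
      (1/(m:ℝ)) * ∑ j : Fin p, |∑ i ∈ Finset.univ.filter (fun i => c i = j),
          (if σ i then (1:ℝ) else -1)| ≤
      ⨆ f : F, (1 / (m : ℝ)) * ∑ i, (if σ i then (1 : ℝ) else -1) * (f : Fin m → ℝ) i := by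
    intro σ
    set S : Fin p → ℝ := fun j => ∑ i ∈ Finset.univ.filter (fun i => c i = j),
      (if σ i then (1:ℝ) else -1) with hS
    set g : Fin m → ℝ := fun i => if 0 ≤ S (c i) then 1 else -1 with hg
    have hgF : g ∈ F := by
      constructor
      · intro i
        simp only [hg]
        split <;> constructor <;> norm_num
      · intro i j hij
        simp only [hg, hij]
    have hbdd : BddAbove (Set.range fun f : F =>
        (1 / (m : ℝ)) * ∑ i, (if σ i then (1 : ℝ) else -1) * (f : Fin m → ℝ) i) := by
      refine ⟨(1/(m:ℝ)) * m, ?_⟩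
      rintro x ⟨f, rfl⟩
      have hb : ∀ i : Fin m, (if σ i then (1:ℝ) else -1) * (f : Fin m → ℝ) i ≤ 1 := by
        intro i
        have h1 := (f.2.1 i).1
        have h2 := (f.2.1 i).2
        cases hσ : σ i <;> simp <;> linarith
      apply mul_le_mul_of_nonneg_left _ (by positivity)
      calc ∑ i, (if σ i then (1:ℝ) else -1) * (f : Fin m → ℝ) i
          ≤ ∑ _i : Fin m, (1:ℝ) := Finset.sum_le_sum fun i _ => hb i
        _ = m := by rw [Finset.sum_const, Finset.card_univ, Fintype.card_fin, nsmul_eq_mul, mul_one]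
    have hval : (1 / (m : ℝ)) * ∑ i, (if σ i then (1 : ℝ) else -1) * g i
        = (1/(m:ℝ)) * ∑ j : Fin p, |S j| := by
      congr 1
      rw [← Finset.sum_fiberwise Finset.univ c (fun i => (if σ i then (1:ℝ) else -1) * g i)]
      apply Finset.sum_congr rfl
      intro j _
      have hfix : ∀ i ∈ Finset.univ.filter (fun i => c i = j),
          (if σ i then (1:ℝ) else -1) * g i
          = (if σ i then (1:ℝ) else -1) * (if 0 ≤ S j then (1:ℝ) else -1) := by
        intro i hi
        have hci : c i = j := (Finset.mem_filter.1 hi).2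
        simp only [hg, hci]
      rw [Finset.sum_congr rfl hfix, ← Finset.sum_mul]
      rcases le_or_gt 0 (S j) with hj | hj
      · rw [if_pos hj, mul_one, abs_of_nonneg hj]
      · rw [if_neg (not_le.2 hj), abs_of_neg hj]
        ring
    calc (1/(m:ℝ)) * ∑ j : Fin p, |S j|
        = (1 / (m : ℝ)) * ∑ i, (if σ i then (1 : ℝ) else -1) * g i := hval.symm
      _ ≤ _ := le_ciSup hbdd (⟨g, hgF⟩ : F)
  -- sum the lower bounds
  have hsum : ∑ σ : Fin m → Bool, (1/(m:ℝ)) * ∑ j : Fin p,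
      |∑ i ∈ Finset.univ.filter (fun i => c i = j), (if σ i then (1:ℝ) else -1)|
      = (1/(m:ℝ)) * (p * (2^(m-n) * radT n)) := by
    rw [← Finset.mul_sum]
    congr 1
    rw [Finset.sum_comm]
    have : ∀ j : Fin p, ∑ σ : Fin m → Bool,
        |∑ i ∈ Finset.univ.filter (fun i => c i = j), (if σ i then (1:ℝ) else -1)|
        = 2^(m-n) * radT n := by
      intro j
      rw [sum_abs_subset m (Finset.univ.filter (fun i => c i = j)), hfib j]
    rw [Finset.sum_congr rfl (fun j _ => this j), Finset.sum_const, Finset.card_univ,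
      Fintype.card_fin, nsmul_eq_mul]
  have hmain : (1/(m:ℝ)) * (p * (2^(m-n) * radT n)) / 2^m ≤ radComplexity m F := by
    rw [radComplexity, ← hsum]
    have hA := Finset.sum_le_sum (fun σ (_ : σ ∈ (Finset.univ : Finset (Fin m → Bool))) => hsup σ)
    gcongr
  -- final arithmetic
  have h2 : (2:ℝ)^(m-n) * 2^n = 2^m := by
    rw [← pow_add]
    congr 1
    omega
  have heq : (1/(m:ℝ)) * (p * (2^(m-n) * radT n)) / 2^m = ((p:ℝ)/m) * (radT n / 2^n) := by
    rw [← h2]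
    have h2n : (0:ℝ) < 2^n := by positivity
    have h2mn : (0:ℝ) < 2^(m-n) := by positivity
    field_simp
  have hkh : Real.sqrt ((n:ℝ)/2) ≤ radT n / 2^n := khintchine n
  have hsqrt : Real.sqrt ((p:ℝ)/(2*m)) = ((p:ℝ)/m) * Real.sqrt ((n:ℝ)/2) := by
    rw [show (p:ℝ)/(2*m) = ((p:ℝ)/m)^2 * ((n:ℝ)/2) by
      rw [div_pow, div_mul_div_comm, div_eq_div_iff (mul_ne_zero two_ne_zero hmpos.ne')
        (mul_ne_zero (pow_ne_zero 2 hmpos.ne') two_ne_zero)]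
      linear_combination (-2*(p:ℝ)*(m:ℝ)) * hnp]
    rw [Real.sqrt_mul (by positivity), Real.sqrt_sq (by positivity)]
  calc Real.sqrt ((p:ℝ)/(2*m)) = ((p:ℝ)/m) * Real.sqrt ((n:ℝ)/2) := hsqrt
    _ ≤ ((p:ℝ)/m) * (radT n / 2^n) := by
        apply mul_le_mul_of_nonneg_left hkh (by positivity)
    _ = (1/(m:ℝ)) * (p * (2^(m-n) * radT n)) / 2^m := heq.symm
    _ ≤ radComplexity m F := hmain
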